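/- Define (p_f) by 1/(x^2 + sqrt(2)·x + 1)^2 = Σ_{f≥0} p_f x^f in ℝ[[x]]. Then p_f = (-1)^{f/4} if f ≡ 0 (mod 4); p_f = -(sqrt(2)/2)·(-1)^{(f-1)/4}·(f+3) if f ≡ 1 (mod 4); p_f = (-1)^{(f-2)/4}·(f+2) if f ≡ 2 (mod 4); and p_f = -(sqrt(2)/2)·(-1)^{(f-3)/4}·(f+1) if f ≡ 3 (mod 4). -/

import Mathlib

open PowerSeries

noncomputable def pp (n : ℕ) : ℝ :=
  if n % 4 = 0 then (-1 : ℝ) ^ (n / 4)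
  else if n % 4 = 1 then -(Real.sqrt 2 / 2) * (-1 : ℝ) ^ ((n - 1) / 4) * (n + 3)
  else if n % 4 = 2 then (-1 : ℝ) ^ ((n - 2) / 4) * (n + 2)
  else -(Real.sqrt 2 / 2) * (-1 : ℝ) ^ ((n - 3) / 4) * (n + 1)

lemma pp0 (k : ℕ) : pp (4 * k) = (-1 : ℝ) ^ k := by
  simp [pp, Nat.mul_mod_right, Nat.mul_div_cancel_left]

lemma pp1 (k : ℕ) : pp (4 * k + 1) = -(Real.sqrt 2 / 2) * (-1 : ℝ) ^ k * (4 * k + 4) := by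
  have h : (4 * k + 1) % 4 = 1 := by omega
  have h2 : (4 * k + 1 - 1) / 4 = k := by omega
  simp only [pp, h, h2]; norm_num; ring

lemma pp2 (k : ℕ) : pp (4 * k + 2) = (-1 : ℝ) ^ k * (4 * k + 4) := by
  have h : (4 * k + 2) % 4 = 2 := by omega
  have h2 : (4 * k + 2 - 2) / 4 = k := by omega
  simp only [pp, h, h2]; norm_num; ring

lemma pp3 (k : ℕ) : pp (4 * k + 3) = -(Real.sqrt 2 / 2) * (-1 : ℝ) ^ k * (4 * k + 4) := by
  have h : (4 * k + 3) % 4 = 3 := by omega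
  have h2 : (4 * k + 3 - 3) / 4 = k := by omega
  simp only [pp, h, h2]; norm_num; ring

lemma hs2 : Real.sqrt 2 * Real.sqrt 2 = 2 := Real.mul_self_sqrt (by norm_num)

lemma sumA (k : ℕ) : pp (4*k) + 2 * Real.sqrt 2 * pp (4*k+1) + 4 * pp (4*k+2)
    + 2 * Real.sqrt 2 * pp (4*k+3) + pp (4*k+4) = 0 := by
  rw [pp0, pp1, pp2, pp3, show 4*k+4 = 4*(k+1) by ring, pp0, pow_succ]
  linear_combination (-2*(-1 : ℝ)^k*(4*k+4)) * hs2

lemma sumB (k : ℕ) : pp (4*k+1) + 2 * Real.sqrt 2 * pp (4*k+2) + 4 * pp (4*k+3)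
    + 2 * Real.sqrt 2 * pp (4*k+4) + pp (4*k+5) = 0 := by
  rw [pp1, pp2, pp3, show 4*k+4 = 4*(k+1) by ring, pp0,
    show 4*k+5 = 4*(k+1)+1 by ring, pp1, pow_succ]
  push_cast
  ring

lemma sumC (k : ℕ) : pp (4*k+2) + 2 * Real.sqrt 2 * pp (4*k+3) + 4 * pp (4*k+4)
    + 2 * Real.sqrt 2 * pp (4*k+5) + pp (4*k+6) = 0 := by
  rw [pp2, pp3, show 4*k+4 = 4*(k+1) by ring, pp0,
    show 4*k+5 = 4*(k+1)+1 by ring, pp1, show 4*k+6 = 4*(k+1)+2 by ring, pp2, pow_succ]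
  push_cast
  linear_combination (4*(-1 : ℝ)^k) * hs2

lemma sumD (k : ℕ) : pp (4*k+3) + 2 * Real.sqrt 2 * pp (4*k+4) + 4 * pp (4*k+5)
    + 2 * Real.sqrt 2 * pp (4*k+6) + pp (4*k+7) = 0 := by
  rw [pp3, show 4*k+4 = 4*(k+1) by ring, pp0, show 4*k+5 = 4*(k+1)+1 by ring, pp1,
    show 4*k+6 = 4*(k+1)+2 by ring, pp2, show 4*k+7 = 4*(k+1)+3 by ring, pp3, pow_succ]
  push_cast
  ring

lemma hQexp :
    ((PowerSeries.X ^ 2 + PowerSeries.C (R := ℝ) (Real.sqrt 2) * PowerSeries.X + 1 :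
        PowerSeries ℝ) ^ 2)
    = X ^ 4 + C (R := ℝ) (2 * Real.sqrt 2) * X ^ 3 + C (R := ℝ) 4 * X ^ 2
        + C (R := ℝ) (2 * Real.sqrt 2) * X + 1 := by
  have h2 : (C (R := ℝ) (Real.sqrt 2)) * (C (R := ℝ) (Real.sqrt 2)) = C (R := ℝ) 2 := by
    rw [← map_mul, Real.mul_self_sqrt (by norm_num)]
  have hC2 : (C (R := ℝ) 2 : ℝ⟦X⟧) = 2 := map_ofNat _ 2
  have h4 : (C (R := ℝ) 4 : ℝ⟦X⟧) = 4 := map_ofNat _ 4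
  have h22 : (C (R := ℝ) (2 * Real.sqrt 2) : ℝ⟦X⟧) = 2 * C (R := ℝ) (Real.sqrt 2) := by
    rw [map_mul, hC2]
  rw [h4, h22]
  linear_combination (X ^ 2 : ℝ⟦X⟧) * h2 + (X ^ 2 : ℝ⟦X⟧) * hC2

lemma coeff_prod (n : ℕ) :
    coeff (R := ℝ) n ((PowerSeries.mk pp) *
      ((PowerSeries.X ^ 2 + PowerSeries.C (R := ℝ) (Real.sqrt 2) * PowerSeries.X + 1 :
        PowerSeries ℝ) ^ 2))
    = (if 4 ≤ n then pp (n - 4) else 0)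
      + 2 * Real.sqrt 2 * (if 3 ≤ n then pp (n - 3) else 0)
      + 4 * (if 2 ≤ n then pp (n - 2) else 0)
      + 2 * Real.sqrt 2 * (if 1 ≤ n then pp (n - 1) else 0)
      + pp n := by
  have hre : (PowerSeries.mk pp) *
      ((PowerSeries.X ^ 2 + PowerSeries.C (R := ℝ) (Real.sqrt 2) * PowerSeries.X + 1 :
        PowerSeries ℝ) ^ 2)
      = (PowerSeries.mk pp * X ^ 4) + C (R := ℝ) (2 * Real.sqrt 2) * (PowerSeries.mk pp * X ^ 3)
        + C (R := ℝ) 4 * (PowerSeries.mk pp * X ^ 2)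
        + C (R := ℝ) (2 * Real.sqrt 2) * (PowerSeries.mk pp * X ^ 1) + PowerSeries.mk pp := by
    rw [hQexp]; ring
  rw [hre]
  simp only [map_add, coeff_C_mul, coeff_mul_X_pow', coeff_mk]

lemma key : (PowerSeries.mk pp) *
    ((PowerSeries.X ^ 2 + PowerSeries.C (R := ℝ) (Real.sqrt 2) * PowerSeries.X + 1 :
      PowerSeries ℝ) ^ 2) = 1 := by
  ext n
  rw [coeff_prod, coeff_one]
  rcases lt_or_ge n 4 with h | h
  · interval_cases n
    · norm_num [pp]
    · norm_num [pp]
      ring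
    · norm_num [pp]
      linear_combination (-4 : ℝ) * hs2
    · norm_num [pp]
      ring
  · obtain ⟨m, rfl⟩ : ∃ m, n = m + 4 := ⟨n - 4, by omega⟩
    rw [if_pos (by omega), if_pos (by omega), if_pos (by omega), if_pos (by omega),
      if_neg (by omega), show m + 4 - 4 = m by omega, show m + 4 - 3 = m + 1 by omega,
      show m + 4 - 2 = m + 2 by omega, show m + 4 - 1 = m + 3 by omega]
    obtain ⟨k, r, hr4, rfl⟩ : ∃ k r, r < 4 ∧ m = 4 * k + r :=
      ⟨m / 4, m % 4, Nat.mod_lt _ (by norm_num), by omega⟩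
    interval_cases r
    · simpa using sumA k
    · simpa [show 4*k+1+4 = 4*k+5 by ring] using sumB k
    · simpa [show 4*k+2+4 = 4*k+6 by ring] using sumC k
    · simpa [show 4*k+3+4 = 4*k+7 by ring] using sumD k

theorem stmt_9 (f : ℕ) :
    PowerSeries.coeff (R := ℝ) f
      (((PowerSeries.X ^ 2 + PowerSeries.C (R := ℝ) (Real.sqrt 2) * PowerSeries.X + 1 :
          PowerSeries ℝ) ^ 2)⁻¹)
      = if f % 4 = 0 then (-1 : ℝ) ^ (f / 4)
        else if f % 4 = 1 then -(Real.sqrt 2 / 2) * (-1 : ℝ) ^ ((f - 1) / 4) * (f + 3)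
        else if f % 4 = 2 then (-1 : ℝ) ^ ((f - 2) / 4) * (f + 2)
        else -(Real.sqrt 2 / 2) * (-1 : ℝ) ^ ((f - 3) / 4) * (f + 1) := by
  have hc : constantCoeff (R := ℝ)
      ((PowerSeries.X ^ 2 + PowerSeries.C (R := ℝ) (Real.sqrt 2) * PowerSeries.X + 1 :
        PowerSeries ℝ) ^ 2) ≠ 0 := by
    rw [map_pow]
    simp
  have hinv := (PowerSeries.eq_inv_iff_mul_eq_one hc).mpr key
  rw [← hinv, coeff_mk]
  rfl
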